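/- Let q be a prime power, a, b nonnegative integers with a, b ≤ q - 2, and let f ∈ F_q[x,y] be a nonzero polynomial with deg_x f ≤ a and deg_y f ≤ b. Then f has at most a(q-1) + b(q-1) - ab zeros in (F_q^×)². -/

import Mathlib

open MvPolynomial

/-- Evaluation of a polynomial in two variables at all points of the torus
`(F^×)²`, as a linear map. -/
noncomputable def evalTorus (F : Type) [Field F] :
    MvPolynomial (Fin 2) F →ₗ[F] ((Fˣ × Fˣ) → F) :=
  LinearMap.pi fun t => (aeval ![((t.1 : F)), ((t.2 : F))]).toLinearMap

lemma card_unit_roots_le (F : Type) [Field F] [Fintype F] [DecidableEq F]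
    (p : Polynomial F) (hp : p ≠ 0) (k : ℕ) (hk : p.natDegree ≤ k) :
    (Finset.univ.filter (fun x : Fˣ => Polynomial.eval (x : F) p = 0)).card ≤ k := by
  have h1 : (Finset.univ.filter (fun x : Fˣ => Polynomial.eval (x : F) p = 0)).card
      ≤ p.roots.toFinset.card := by
    refine Finset.card_le_card_of_injOn (fun x => (x : F)) ?_ ?_
    · intro x hx
      simp only [Finset.mem_coe, Finset.mem_filter] at hx
      simp [Multiset.mem_toFinset, Polynomial.mem_roots hp, Polynomial.IsRoot, hx.2]
    · intro x _ y _ h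
      exact Units.ext h
  exact h1.trans ((p.roots.toFinset_card_le).trans ((Polynomial.card_roots' p).trans hk))

/-- A nonzero polynomial with x-degree at most `a` and y-degree at most `b`,
`a, b ≤ q - 2`, has at most `a(q-1) + b(q-1) - ab` zeros in the torus. -/
theorem zeros_bound_bidegree (F : Type) [Field F] [Fintype F] [DecidableEq F]
    (a b : ℕ) (haq : a ≤ Fintype.card F - 2) (hbq : b ≤ Fintype.card F - 2)
    (f : MvPolynomial (Fin 2) F) (hf : f ≠ 0)
    (hdx : f.degreeOf 0 ≤ a) (hdy : f.degreeOf 1 ≤ b) :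
    (Nat.card {t : Fˣ × Fˣ // evalTorus F f t = 0} : ℤ) ≤
      (a : ℤ) * (Fintype.card F - 1) + (b : ℤ) * (Fintype.card F - 1)
        - (a : ℤ) * b := by
  classical
  have hq2 : 2 ≤ Fintype.card F := Fintype.one_lt_card
  set q := Fintype.card F with hq
  set u := Fintype.card Fˣ with hu
  have huq : u = q - 1 := Fintype.card_units (α := F)
  -- the polynomial in x with coefficients polynomials in y
  set Q : Polynomial (MvPolynomial (Fin 1) F) := finSuccEquiv F 1 f with hQdef
  have hQ0 : Q ≠ 0 := by
    intro h
    exact hf ((map_eq_zero_iff _ (finSuccEquiv F 1).injective).mp h)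
  obtain ⟨i, hi⟩ : ∃ n, Q.coeff n ≠ 0 := by
    by_contra hc
    push_neg at hc
    exact hQ0 (Polynomial.ext fun n => by simp [hc n])
  set c : MvPolynomial (Fin 1) F := Q.coeff i with hcdef
  have hcb : c.degreeOf 0 ≤ b := (degreeOf_coeff_finSuccEquiv f 0 i).trans hdy
  -- evaluation identity
  have heval : ∀ x y : F, eval ![x, y] f =
      Polynomial.eval x (Q.map (eval ![y])) := by
    intro x y
    have := eval_eq_eval_mv_eval' (![y] : Fin 1 → F) x f
    simpa using this
  -- the univariate polynomial in y whose roots are the bad y's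
  set h : Polynomial F := (finSuccEquiv F 0 c).map (eval (![] : Fin 0 → F)) with hhdef
  have hevalc : ∀ y : F, eval ![y] c = Polynomial.eval y h := by
    intro y
    have := eval_eq_eval_mv_eval' (![] : Fin 0 → F) y c
    simpa using this
  have hinj0 : Function.Injective (eval (![] : Fin 0 → F) :
      MvPolynomial (Fin 0) F →+* F) := by
    intro p p' hpp
    obtain ⟨r, rfl⟩ := MvPolynomial.C_surjective (Fin 0) p
    obtain ⟨r', rfl⟩ := MvPolynomial.C_surjective (Fin 0) p'
    simp only [eval_C] at hpp
    rw [hpp]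
  have hh0 : h ≠ 0 := by
    rw [hhdef, Ne, Polynomial.map_eq_zero_iff hinj0, map_eq_zero_iff _
      (finSuccEquiv F 0).injective]
    exact hi
  have hhdeg : h.natDegree ≤ b := by
    calc h.natDegree ≤ (finSuccEquiv F 0 c).natDegree := Polynomial.natDegree_map_le
    _ = c.degreeOf 0 := natDegree_finSuccEquiv c
    _ ≤ b := hcb
  set Bad : Finset Fˣ := Finset.univ.filter (fun y : Fˣ => eval ![(y : F)] c = 0)
    with hBaddef
  have hBadb : Bad.card ≤ b := by
    have : Bad = Finset.univ.filter (fun y : Fˣ => Polynomial.eval (y : F) h = 0) := by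
      apply Finset.filter_congr
      intro y _
      simp [hevalc]
    rw [this]
    exact card_unit_roots_le F h hh0 b hhdeg
  -- cardinality as a sum over y
  have hcard : Nat.card {t : Fˣ × Fˣ // evalTorus F f t = 0} =
      ∑ y : Fˣ, (Finset.univ.filter
        (fun x : Fˣ => Polynomial.eval (x : F) (Q.map (eval ![(y : F)])) = 0)).card := by
    rw [Nat.card_eq_fintype_card]
    have e : {t : Fˣ × Fˣ // evalTorus F f t = 0} ≃
        Σ y : Fˣ, {x : Fˣ // Polynomial.eval (x : F) (Q.map (eval ![(y : F)])) = 0} := by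
      refine (Equiv.subtypeEquiv (Equiv.prodComm Fˣ Fˣ) ?_).trans
        (Equiv.subtypeProdEquivSigmaSubtype
          (fun (y x : Fˣ) => Polynomial.eval (x : F) (Q.map (eval ![(y : F)])) = 0))
      intro t
      have : evalTorus F f t = eval ![((t.1 : F)), ((t.2 : F))] f := by
        show aeval ![((t.1 : F)), ((t.2 : F))] f = _
        rw [aeval_def, Algebra.algebraMap_self]; rfl
      rw [this, heval]
      rfl
    rw [Fintype.card_congr e, Fintype.card_sigma]
    congr 1
    ext y
    exact Fintype.card_subtype _
  -- bound the sum
  have hsum : ∑ y : Fˣ, (Finset.univ.filter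
      (fun x : Fˣ => Polynomial.eval (x : F) (Q.map (eval ![(y : F)])) = 0)).card
      ≤ Bad.card * u + (u - Bad.card) * a := by
    rw [← Finset.sum_sdiff (Finset.subset_univ Bad)]
    have h1 : ∑ y ∈ Bad, (Finset.univ.filter
        (fun x : Fˣ => Polynomial.eval (x : F) (Q.map (eval ![(y : F)])) = 0)).card
        ≤ Bad.card * u := by
      refine (Finset.sum_le_card_nsmul _ _ u ?_).trans (le_of_eq (by simp [smul_eq_mul]))
      intro y _
      exact (Finset.card_filter_le _ _).trans (le_of_eq (Finset.card_univ))
    have h2 : ∑ y ∈ Finset.univ \ Bad, (Finset.univ.filter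
        (fun x : Fˣ => Polynomial.eval (x : F) (Q.map (eval ![(y : F)])) = 0)).card
        ≤ (u - Bad.card) * a := by
      have hcard' : (Finset.univ \ Bad).card = u - Bad.card := by
        rw [Finset.card_sdiff_of_subset (Finset.subset_univ Bad), Finset.card_univ]
      refine (Finset.sum_le_card_nsmul _ _ a ?_).trans
        (le_of_eq (by rw [hcard']; simp [smul_eq_mul]))
      intro y hy
      simp only [Finset.mem_sdiff, hBaddef, Finset.mem_filter, Finset.mem_univ,
        true_and] at hy
      have hg0 : Q.map (eval ![(y : F)]) ≠ 0 := by
        intro hg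
        apply hy
        have := congrArg (fun p => Polynomial.coeff p i) hg
        simpa [Polynomial.coeff_map] using this
      have hgdeg : (Q.map (eval ![(y : F)])).natDegree ≤ a := by
        calc (Q.map (eval ![(y : F)])).natDegree ≤ Q.natDegree :=
          Polynomial.natDegree_map_le
        _ = f.degreeOf 0 := natDegree_finSuccEquiv f
        _ ≤ a := hdx
      exact card_unit_roots_le F _ hg0 a hgdeg
    omega
  -- conclude over ℤ
  have hN : (Nat.card {t : Fˣ × Fˣ // evalTorus F f t = 0} : ℤ)
      ≤ (Bad.card : ℤ) * u + ((u : ℤ) - Bad.card) * a := by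
    have hBu : Bad.card ≤ u := (Finset.card_le_card (Finset.subset_univ Bad)).trans
      (le_of_eq Finset.card_univ)
    have := hcard ▸ hsum
    have h3 : (Nat.card {t : Fˣ × Fˣ // evalTorus F f t = 0} : ℤ)
        ≤ ((Bad.card * u + (u - Bad.card) * a : ℕ) : ℤ) := by exact_mod_cast this
    refine h3.trans (le_of_eq ?_)
    push_cast [Nat.cast_sub hBu]
    ring
  have huZ : (u : ℤ) = (q : ℤ) - 1 := by
    rw [huq]
    push_cast [Nat.cast_sub (by omega : 1 ≤ q)]
    ring
  have haZ : (a : ℤ) ≤ (q : ℤ) - 2 := by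
    have : (a : ℤ) ≤ ((q - 2 : ℕ) : ℤ) := by exact_mod_cast haq
    rwa [Nat.cast_sub hq2] at this
  have hBZ : (Bad.card : ℤ) ≤ b := by exact_mod_cast hBadb
  nlinarith [hN, huZ, mul_nonneg (sub_nonneg.mpr hBZ) (by nlinarith [huZ, haZ] : (0:ℤ) ≤ (u:ℤ) - a)]
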